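/- Let P₁, …, P_k be mutually equivalent probability measures on (Ω, 𝓕), let M = {Σ_{i=1}^k α_i P_i : α_i ≥ 0, Σ_{i=1}^k α_i = 1}, let 𝓕_n be a sub-σ-algebra of 𝓕, and let ξ be a random variable integrable with respect to each P_i. Then almost surely sup_{Q∈M} E^Q[ξ | 𝓕_n] = max_{1≤i≤k} E^{P_i}[ξ | 𝓕_n]; that is, for every Q ∈ M one has E^Q[ξ | 𝓕_n] ≤ max_{1≤i≤k} E^{P_i}[ξ | 𝓕_n] a.s., and this bound is attained since each P_i belongs to M. -/

import Mathlib

open MeasureTheory Filter Set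
open scoped ENNReal

/-- The convex set of measures generated by the finite family `P`. -/
def mixSet {Ω : Type*} {m0 : MeasurableSpace Ω} {k : ℕ} (P : Fin (k + 1) → Measure Ω) :
    Set (Measure Ω) :=
  {Q | ∃ α : Fin (k + 1) → ℝ, (∀ i, 0 ≤ α i) ∧ (∑ i, α i = 1) ∧
    Q = ∑ i, (ENNReal.ofReal (α i)) • P i}

private lemma measSet_abs_le {Ω : Type*} {m : MeasurableSpace Ω} {f : Ω → ℝ}
    (hf : Measurable f) (N : ℝ) : MeasurableSet {ω | |f ω| ≤ N} :=
  measurableSet_le hf.abs measurable_const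

private lemma stmt10_aux {Ω : Type*} {𝓖 m0 : MeasurableSpace Ω} (h𝓖 : 𝓖 ≤ m0)
    (k : ℕ) (P : Fin (k + 1) → Measure Ω)
    (hP_prob : ∀ i, IsProbabilityMeasure (P i))
    (hP_equiv : ∀ i j, P i ≪ P j)
    (ξ : Ω → ℝ) (hξ_int : ∀ i, Integrable ξ (P i))
    (α : Fin (k + 1) → ℝ) (hα0 : ∀ i, 0 ≤ α i) (hα1 : ∑ i, α i = 1) :
    ∀ᵐ ω ∂(P 0),
      ((∑ i, (ENNReal.ofReal (α i)) • P i)[ξ | 𝓖]) ω ≤ ⨆ i : Fin (k + 1), ((P i)[ξ | 𝓖]) ω := by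
  set μ : Measure Ω := ∑ i, (ENNReal.ofReal (α i)) • P i with hμ
  -- μ is a probability measure
  haveI hμprob : IsProbabilityMeasure μ := by
    constructor
    simp only [hμ, Measure.finset_sum_apply, Measure.smul_apply, smul_eq_mul]
    have : ∀ i ∈ Finset.univ, ENNReal.ofReal (α i) * (P i) Set.univ
        = ENNReal.ofReal (α i) := by
      intro i _
      haveI := hP_prob i
      simp
    rw [Finset.sum_congr rfl this, ← ENNReal.ofReal_sum_of_nonneg (fun i _ => hα0 i), hα1,
      ENNReal.ofReal_one]
  -- P 0 ≪ μ
  have hP0μ : P 0 ≪ μ := by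
    obtain ⟨i, hi⟩ : ∃ i, 0 < α i := by
      by_contra h
      push_neg at h
      have : ∑ i, α i ≤ 0 := Finset.sum_nonpos (fun i _ => h i)
      linarith [hα1]
    intro s hs
    have hsum : ∑ j, (ENNReal.ofReal (α j) • P j) s = 0 := by
      simpa [hμ, Measure.finset_sum_apply] using hs
    have : (ENNReal.ofReal (α i) • P i) s = 0 :=
      (Finset.sum_eq_zero_iff.mp hsum) i (Finset.mem_univ i)
    have hPi : P i s = 0 := by
      simp only [Measure.smul_apply, smul_eq_mul, mul_eq_zero] at this
      rcases this with h | h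
      · exact absurd h (by simp [ENNReal.ofReal_eq_zero, not_le, hi])
      · exact h
    exact hP_equiv 0 i hPi
  -- integrability of ξ w.r.t. μ
  have hint : Integrable ξ μ := by
    rw [hμ]
    refine integrable_finset_sum_measure.mpr (fun i _ => ?_)
    exact (hξ_int i).smul_measure ENNReal.ofReal_ne_top
  set g : Ω → ℝ := fun ω => ⨆ i : Fin (k + 1), ((P i)[ξ | 𝓖]) ω with hg
  have hgmeas : Measurable[𝓖] g :=
    Measurable.iSup (fun i => (stronglyMeasurable_condExp (μ := P i)).measurable)
  have hcondmeas : Measurable[𝓖] (μ[ξ|𝓖]) := stronglyMeasurable_condExp.measurable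
  have hbddg : ∀ ω, BddAbove (Set.range fun i : Fin (k+1) => ((P i)[ξ | 𝓖]) ω) :=
    fun ω => Set.Finite.bddAbove (Set.finite_range _)
  have hle_g : ∀ i ω, ((P i)[ξ | 𝓖]) ω ≤ g ω := fun i ω => le_ciSup (hbddg ω) i
  -- key step
  have key : ∀ ε : ℝ, 0 < ε → ∀ N : ℝ,
      μ ({ω | g ω + ε ≤ (μ[ξ|𝓖]) ω} ∩ {ω | ∀ i, |((P i)[ξ | 𝓖]) ω| ≤ N}) = 0 := by
    intro ε hε N
    set A : Set Ω := {ω | g ω + ε ≤ (μ[ξ|𝓖]) ω} ∩ {ω | ∀ i, |((P i)[ξ | 𝓖]) ω| ≤ N}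
      with hA
    have hAmeas𝓖 : MeasurableSet[𝓖] A := by
      refine MeasurableSet.inter ?_ ?_
      · exact measurableSet_le (hgmeas.add measurable_const) hcondmeas
      · have : {ω | ∀ i, |((P i)[ξ | 𝓖]) ω| ≤ N}
            = ⋂ i, {ω | |((P i)[ξ | 𝓖]) ω| ≤ N} := by
          ext ω; simp [Set.mem_iInter]
        rw [this]
        exact MeasurableSet.iInter (fun i => measSet_abs_le
          (stronglyMeasurable_condExp (μ := P i) (m := 𝓖)).measurable N)
    have hAmeas : MeasurableSet A := h𝓖 _ hAmeas𝓖
    -- bound for g on A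
    have hgbound : ∀ ω ∈ A, |g ω| ≤ |N| := by
      intro ω hω
      obtain ⟨-, h2⟩ := hω
      have hN : ∀ i, |((P i)[ξ | 𝓖]) ω| ≤ N := h2
      have hub : g ω ≤ N := ciSup_le (fun i => (abs_le.mp (hN i)).2)
      have hlb : -N ≤ g ω := le_trans (abs_le.mp (hN 0)).1 (hle_g 0 ω)
      rw [abs_le]
      constructor
      · linarith [neg_abs_le N, le_abs_self N]
      · linarith [le_abs_self N]
    -- integrability of g on A w.r.t. any finite measure
    have hgint : ∀ ν : Measure Ω, IsFiniteMeasure ν → IntegrableOn g A ν := by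
      intro ν hν
      rw [← integrable_indicator_iff hAmeas]
      refine Integrable.mono' (integrable_const |N|)
        ((hgmeas.mono h𝓖 le_rfl).indicator hAmeas).aestronglyMeasurable
        (Filter.Eventually.of_forall (fun ω => ?_))
      by_cases hω : ω ∈ A
      · rw [Set.indicator_of_mem hω]
        exact hgbound ω hω
      · rw [Set.indicator_of_notMem hω]
        simp
    -- the chain of (in)equalities
    have h1 : ∫ x in A, (μ[ξ|𝓖]) x ∂μ = ∫ x in A, ξ x ∂μ :=
      setIntegral_condExp h𝓖 hint hAmeas𝓖
    have hsplit : ∀ f : Ω → ℝ, (∀ i, IntegrableOn f A (P i)) →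
        ∫ x in A, f x ∂μ = ∑ i, α i * ∫ x in A, f x ∂(P i) := by
      intro f hf
      rw [← integral_indicator hAmeas, hμ, integral_finset_sum_measure (fun i _ =>
        (((integrable_indicator_iff hAmeas).mpr (hf i)).smul_measure
          ENNReal.ofReal_ne_top))]
      refine Finset.sum_congr rfl (fun i _ => ?_)
      rw [integral_smul_measure, ENNReal.toReal_ofReal (hα0 i), integral_indicator hAmeas,
        smul_eq_mul]
    have h2 : ∫ x in A, ξ x ∂μ = ∑ i, α i * ∫ x in A, ξ x ∂(P i) :=
      hsplit ξ (fun i => (hξ_int i).integrableOn)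
    have h3 : ∀ i, ∫ x in A, ξ x ∂(P i) ≤ ∫ x in A, g x ∂(P i) := by
      intro i
      haveI := hP_prob i
      rw [← setIntegral_condExp h𝓖 (hξ_int i) hAmeas𝓖]
      exact setIntegral_mono_on integrable_condExp.integrableOn
        (hgint (P i) inferInstance) hAmeas (fun ω _ => hle_g i ω)
    have h4 : ∑ i, α i * ∫ x in A, ξ x ∂(P i) ≤ ∑ i, α i * ∫ x in A, g x ∂(P i) :=
      Finset.sum_le_sum (fun i _ => mul_le_mul_of_nonneg_left (h3 i) (hα0 i))
    have h5 : ∑ i, α i * ∫ x in A, g x ∂(P i) = ∫ x in A, g x ∂μ :=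
      (hsplit g (fun i => hgint (P i) (by haveI := hP_prob i; infer_instance))).symm
    have h6 : ∫ x in A, g x ∂μ + ε * (μ A).toReal ≤ ∫ x in A, (μ[ξ|𝓖]) x ∂μ := by
      have : ∫ x in A, (g x + ε) ∂μ ≤ ∫ x in A, (μ[ξ|𝓖]) x ∂μ :=
        setIntegral_mono_on ((hgint μ inferInstance).add ((integrableOn_const_iff).mpr
          (Or.inr (measure_lt_top μ A)))) integrable_condExp.integrableOn hAmeas
          (fun ω hω => hω.1)
      rw [integral_add (hgint μ inferInstance) ((integrableOn_const_iff).mpr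
        (Or.inr (measure_lt_top μ A))), setIntegral_const, smul_eq_mul, mul_comm] at this
      exact this
    have hfinal : ε * (μ A).toReal ≤ 0 := by linarith [h6, h1, h2, h4, h5]
    have htr : (μ A).toReal = 0 := by
      nlinarith [ENNReal.toReal_nonneg (a := μ A)]
    rcases (ENNReal.toReal_eq_zero_iff _).mp htr with h | h
    · exact h
    · exact absurd h (measure_ne_top μ A)
  -- assemble
  have key2 : ∀ ε : ℝ, 0 < ε → μ {ω | g ω + ε ≤ (μ[ξ|𝓖]) ω} = 0 := by
    intro ε hε
    have hsub : {ω | g ω + ε ≤ (μ[ξ|𝓖]) ω} ⊆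
        ⋃ N : ℕ, ({ω | g ω + ε ≤ (μ[ξ|𝓖]) ω} ∩ {ω | ∀ i, |((P i)[ξ | 𝓖]) ω| ≤ (N : ℝ)}) := by
      intro ω hω
      obtain ⟨N, hN⟩ : ∃ N : ℕ, ∀ i, |((P i)[ξ | 𝓖]) ω| ≤ (N : ℝ) := by
        obtain ⟨N, hN⟩ := exists_nat_ge (⨆ i : Fin (k+1), |((P i)[ξ | 𝓖]) ω|)
        exact ⟨N, fun i => le_trans (le_ciSup (f := fun i : Fin (k+1) => |((P i)[ξ | 𝓖]) ω|) (Set.Finite.bddAbove (Set.finite_range _)) i) hN⟩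
      exact Set.mem_iUnion.mpr ⟨N, hω, hN⟩
    exact measure_mono_null hsub (measure_iUnion_null (fun N => key ε hε N))
  have key3 : μ {ω | g ω < (μ[ξ|𝓖]) ω} = 0 := by
    have hsub : {ω | g ω < (μ[ξ|𝓖]) ω} ⊆
        ⋃ n : ℕ, {ω | g ω + 1/(n+1) ≤ (μ[ξ|𝓖]) ω} := by
      intro ω hω
      obtain ⟨n, hn⟩ := exists_nat_one_div_lt (K := ℝ) (sub_pos.mpr hω)
      exact Set.mem_iUnion.mpr ⟨n, by simp only [Set.mem_setOf_eq]; linarith [hn]⟩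
    exact measure_mono_null hsub (measure_iUnion_null
      (fun n => key2 (1/(n+1)) (by positivity)))
  have h0 : P 0 {ω | g ω < (μ[ξ|𝓖]) ω} = 0 := hP0μ key3
  rw [ae_iff]
  simpa only [not_le] using h0

/-- **Lemma `q2` of the paper.**
For mutually equivalent probability measures `P 0, …, P k`, their convex hull `M`,
a sub-σ-algebra `𝓖 ≤ 𝓕` and a random variable `ξ` integrable with respect to each
`P i`, one has `sup_{Q ∈ M} E^Q[ξ | 𝓖] = max_i E^{P i}[ξ | 𝓖]` almost surely:
every `Q ∈ M` satisfies `E^Q[ξ | 𝓖] ≤ max_i E^{P i}[ξ | 𝓖]` a.s., and the bound is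
attained since each `P i` belongs to `M`. -/
theorem stmt10 {Ω : Type*} {m0 : MeasurableSpace Ω}
    (k : ℕ) (P : Fin (k + 1) → Measure Ω)
    (hP_prob : ∀ i, IsProbabilityMeasure (P i))
    (hP_equiv : ∀ i j, P i ≪ P j)
    (𝓖 : MeasurableSpace Ω) (h𝓖 : 𝓖 ≤ m0)
    (ξ : Ω → ℝ) (hξ_int : ∀ i, Integrable ξ (P i)) :
    (∀ Q ∈ mixSet P, ∀ᵐ ω ∂(P 0),
        (Q[ξ | 𝓖]) ω ≤ ⨆ i : Fin (k + 1), ((P i)[ξ | 𝓖]) ω) ∧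
    (∀ i : Fin (k + 1), P i ∈ mixSet P) := by
  constructor
  · rintro Q ⟨α, hα0, hα1, rfl⟩
    exact stmt10_aux h𝓖 k P hP_prob hP_equiv ξ hξ_int α hα0 hα1
  · intro i
    refine ⟨fun j => if j = i then 1 else 0, fun j => by positivity, by simp, ?_⟩
    rw [Finset.sum_eq_single i (fun j _ hj => by simp [hj]) (by simp)]
    simp
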